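/- Let w ∈ ℝ^n, p > 0, Ω = {x ∈ ℝ^n : ‖x − w‖ ≤ p}, and φ(x) = −√(p² − ‖x − w‖²) on the interior of Ω. Then φ is convex on Ω, and for every y ∈ ℝ^n the minimizer of x ↦ −⟨x, y⟩ + φ(x) over Ω is x*(y) = p·y / √(1 + ‖y‖²) + w. -/
import Mathlib


open RealInnerProductSpace

private lemma key1 {p a b : ℝ} (ha0 : 0 ≤ a) (hb0 : 0 ≤ b) (hap : a ≤ p) (hbp : b ≤ p) :
    Real.sqrt (p ^ 2 - a ^ 2) * Real.sqrt (p ^ 2 - b ^ 2) ≤ p ^ 2 - a * b := by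
  have h1 : (0:ℝ) ≤ p ^ 2 - a ^ 2 := by nlinarith
  have h2 : (0:ℝ) ≤ p ^ 2 - b ^ 2 := by nlinarith
  calc Real.sqrt (p ^ 2 - a ^ 2) * Real.sqrt (p ^ 2 - b ^ 2)
      = Real.sqrt ((p ^ 2 - a ^ 2) * (p ^ 2 - b ^ 2)) := (Real.sqrt_mul h1 _).symm
    _ ≤ Real.sqrt ((p ^ 2 - a * b) ^ 2) := by
        apply Real.sqrt_le_sqrt; nlinarith [sq_nonneg (a - b)]
    _ = p ^ 2 - a * b := Real.sqrt_sq (by nlinarith)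

private lemma key2 {p a t : ℝ} (ha0 : 0 ≤ a) (ht0 : 0 ≤ t) (hap : a ≤ p) :
    a * t + Real.sqrt (p ^ 2 - a ^ 2) ≤ p * Real.sqrt (1 + t ^ 2) := by
  have hp0 : 0 ≤ p := le_trans ha0 hap
  have h1 : (0:ℝ) ≤ p ^ 2 - a ^ 2 := by nlinarith
  have hA0 : 0 ≤ Real.sqrt (p ^ 2 - a ^ 2) := Real.sqrt_nonneg _
  have hA2 : Real.sqrt (p ^ 2 - a ^ 2) ^ 2 = p ^ 2 - a ^ 2 := Real.sq_sqrt h1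
  have : p * Real.sqrt (1 + t ^ 2) = Real.sqrt (p ^ 2 * (1 + t ^ 2)) := by
    rw [Real.sqrt_mul (by positivity), Real.sqrt_sq hp0]
  rw [this]
  rw [show a * t + Real.sqrt (p ^ 2 - a ^ 2)
      = Real.sqrt ((a * t + Real.sqrt (p ^ 2 - a ^ 2)) ^ 2) from
    (Real.sqrt_sq (by positivity)).symm]
  apply Real.sqrt_le_sqrt
  nlinarith [sq_nonneg (a - Real.sqrt (p ^ 2 - a ^ 2) * t)]

/-- Spherical generating function for a Euclidean ball: convexity and the
closed-form conjugate-gradient (minimizer) map. -/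
theorem ball_generating_function
    {n : ℕ} (w : EuclideanSpace ℝ (Fin n)) (p : ℝ) (hp : 0 < p) :
    ConvexOn ℝ {x : EuclideanSpace ℝ (Fin n) | ‖x - w‖ ≤ p}
      (fun x => -Real.sqrt (p ^ 2 - ‖x - w‖ ^ 2)) ∧
    ∀ y : EuclideanSpace ℝ (Fin n),
      IsMinOn
        (fun x => -⟪x, y⟫ + -Real.sqrt (p ^ 2 - ‖x - w‖ ^ 2))
        {x : EuclideanSpace ℝ (Fin n) | ‖x - w‖ ≤ p}
        ((p / Real.sqrt (1 + ‖y‖ ^ 2)) • y + w) := by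
  have hset : {x : EuclideanSpace ℝ (Fin n) | ‖x - w‖ ≤ p} = Metric.closedBall w p := by
    ext x; simp [Metric.mem_closedBall, dist_eq_norm]
  constructor
  · refine ⟨by rw [hset]; exact convex_closedBall w p, ?_⟩
    intro x hx z hz a b ha hb hab
    simp only [Set.mem_setOf_eq] at hx hz
    set u := x - w with hu
    set v := z - w with hv
    have huv : a • x + b • z - w = a • u + b • v := by
      have : a • u + b • v = a • x + b • z - (a + b) • w := by
        simp [hu, hv, smul_sub, add_smul]; abel
      rw [this, hab, one_smul]
    have hu0 : 0 ≤ ‖u‖ := norm_nonneg _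
    have hv0 : 0 ≤ ‖v‖ := norm_nonneg _
    have hA2 : Real.sqrt (p ^ 2 - ‖u‖ ^ 2) ^ 2 = p ^ 2 - ‖u‖ ^ 2 :=
      Real.sq_sqrt (by nlinarith)
    have hB2 : Real.sqrt (p ^ 2 - ‖v‖ ^ 2) ^ 2 = p ^ 2 - ‖v‖ ^ 2 :=
      Real.sq_sqrt (by nlinarith)
    have hA0 : 0 ≤ Real.sqrt (p ^ 2 - ‖u‖ ^ 2) := Real.sqrt_nonneg _
    have hB0 : 0 ≤ Real.sqrt (p ^ 2 - ‖v‖ ^ 2) := Real.sqrt_nonneg _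
    have hkey : a * Real.sqrt (p ^ 2 - ‖u‖ ^ 2) + b * Real.sqrt (p ^ 2 - ‖v‖ ^ 2)
        ≤ Real.sqrt (p ^ 2 - ‖a • u + b • v‖ ^ 2) := by
      have hnorm : ‖a • u + b • v‖ ^ 2
          = a ^ 2 * ‖u‖ ^ 2 + 2 * (a * b * ⟪u, v⟫) + b ^ 2 * ‖v‖ ^ 2 := by
        rw [norm_add_sq_real, norm_smul, norm_smul, real_inner_smul_left,
          real_inner_smul_right, Real.norm_eq_abs, Real.norm_eq_abs,
          abs_of_nonneg ha, abs_of_nonneg hb]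
        ring
      have hcs : ⟪u, v⟫ ≤ ‖u‖ * ‖v‖ := real_inner_le_norm u v
      have hk1 := key1 hu0 hv0 hx hz
      rw [show a * Real.sqrt (p ^ 2 - ‖u‖ ^ 2) + b * Real.sqrt (p ^ 2 - ‖v‖ ^ 2)
          = Real.sqrt ((a * Real.sqrt (p ^ 2 - ‖u‖ ^ 2)
            + b * Real.sqrt (p ^ 2 - ‖v‖ ^ 2)) ^ 2) from
        (Real.sqrt_sq (by positivity)).symm]
      apply Real.sqrt_le_sqrt
      rw [hnorm]
      have h1 : a * b * (⟪u, v⟫ + Real.sqrt (p ^ 2 - ‖u‖ ^ 2) * Real.sqrt (p ^ 2 - ‖v‖ ^ 2))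
          ≤ a * b * p ^ 2 :=
        mul_le_mul_of_nonneg_left (by linarith) (mul_nonneg ha hb)
      have hpq : p ^ 2 * (a + b) ^ 2 = p ^ 2 := by rw [hab]; ring
      nlinarith [h1, hA2, hB2, hpq]
    simp only [smul_eq_mul, huv]
    linarith
  · intro y
    have hs0 : (0:ℝ) < Real.sqrt (1 + ‖y‖ ^ 2) := Real.sqrt_pos.mpr (by positivity)
    set s := Real.sqrt (1 + ‖y‖ ^ 2) with hs
    have hs2 : s ^ 2 = 1 + ‖y‖ ^ 2 := Real.sq_sqrt (by positivity)
    have hys : ‖y‖ ≤ s := by nlinarith [norm_nonneg y]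
    rw [isMinOn_iff]
    intro x hx
    simp only [Set.mem_setOf_eq] at hx
    set u := x - w with hu
    have hxw : (p / s) • y + w - w = (p / s) • y := by abel
    have hnx : ‖(p / s) • y‖ = (p / s) * ‖y‖ := by
      rw [norm_smul, Real.norm_eq_abs, abs_of_nonneg (by positivity)]
    have hval : p ^ 2 - ‖(p / s) • y‖ ^ 2 = (p / s) ^ 2 := by
      rw [hnx]
      field_simp
      nlinarith
    have hsqrtval : Real.sqrt (p ^ 2 - ‖(p / s) • y‖ ^ 2) = p / s := by
      rw [hval, Real.sqrt_sq (by positivity)]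
    have hinner : ⟪(p / s) • y + w, y⟫ = (p / s) * ‖y‖ ^ 2 + ⟪w, y⟫ := by
      rw [inner_add_left, real_inner_smul_left, real_inner_self_eq_norm_sq]
    have hinnerx : ⟪x, y⟫ = ⟪u, y⟫ + ⟪w, y⟫ := by
      rw [hu, inner_sub_left]; ring
    simp only [hxw, hsqrtval, hinner, hinnerx]
    have hcs : ⟪u, y⟫ ≤ ‖u‖ * ‖y‖ := real_inner_le_norm u y
    have hk2 := key2 (norm_nonneg u) (norm_nonneg y) hx
    have hsne : s ≠ 0 := ne_of_gt hs0
    have hps : p / s * ‖y‖ ^ 2 + p / s = p * s := by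
      have : p / s * ‖y‖ ^ 2 + p / s = p / s * (1 + ‖y‖ ^ 2) := by ring
      rw [this, ← hs2, pow_two, ← mul_assoc, div_mul_cancel₀ p hsne]
    rw [← hs] at hk2
    linarith
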